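/- Let n ≥ 2 and p > q > 0. Consider a cycle (b_1,…,b_n) of lattice vectors, each of the form ±q·e_{j_i} ± p·e_{j_{i+1}} with j_1,…,j_n a permutation of [1,n] (indices cyclic). If C = (b_1,…,b_n) is the matrix with these columns, then |det(C)| = p^n + q^n. -/

import Mathlib

open Finset Equiv Equiv.Perm Matrix

open Fin.NatCast in
private lemma cycle_perm_char {n : ℕ} [NeZero n] (σ : Equiv.Perm (Fin n))
    (h : ∀ i, σ i = i ∨ σ i = i + 1) :
    (∀ i, σ i = i) ∨ (∀ i, σ i = i + 1) := by
  by_cases hall : ∀ i, σ i = i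
  · exact Or.inl hall
  right
  push_neg at hall
  obtain ⟨i, hi⟩ := hall
  have hi1 : σ i = i + 1 := (h i).resolve_left hi
  have h10 : (1 : Fin n) ≠ 0 := by
    intro e
    exact hi (by rw [hi1, e, add_zero])
  have key : ∀ m : ℕ, σ (i + (m : Fin n)) = i + (m : Fin n) + 1 := by
    intro m
    induction m with
    | zero => simpa using hi1
    | succ k ih =>
      have hk : (((k : ℕ) + 1 : ℕ) : Fin n) = (k : Fin n) + 1 := by push_cast; ring
      rw [hk, ← add_assoc]
      rcases h (i + (k : Fin n) + 1) with h' | h'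
      · exfalso
        have h2 := σ.injective (h'.trans ih.symm)
        nth_rewrite 2 [← add_zero (i + (k : Fin n))] at h2
        exact h10 (add_left_cancel h2)
      · exact h'
  intro k
  have hk := key ((k - i : Fin n) : ℕ)
  rw [Fin.cast_val_eq_self] at hk
  have : i + (k - i) = k := by abel
  rw [this] at hk
  exact hk

/-- The determinant of a cyclic matrix whose `i`-th column is
`−x_i·q·e_{j(i)} + x_{i+1}·p·e_{j(i+1)}` (indices cyclic, with the sign flipping
to `−x_1` upon wrapping around, as in the construction `S·C = A`), where
`j` is a permutation of the indices and the `x_i` are signs, has absolute value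
`pⁿ + qⁿ`. -/
theorem abs_det_cycle_matrix (n : ℕ) (hn : 2 ≤ n) (p q : ℝ) (hq : 0 < q) (hqp : q < p)
    (x : Fin n → ℝ) (hx : ∀ i, x i = 1 ∨ x i = -1) (j : Equiv.Perm (Fin n)) :
    |(Matrix.of fun r i : Fin n =>
        -(x i) * q * (if r = j i then 1 else 0) +
          (if (i : ℕ) + 1 = n then -(x ⟨0, by omega⟩) else x (i + ⟨1, by omega⟩)) * p *
            (if r = j (i + ⟨1, by omega⟩) then 1 else 0)).det| = p ^ n + q ^ n := by
  obtain ⟨m, rfl⟩ : ∃ m, n = m + 2 := ⟨n - 2, by omega⟩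
  set y : Fin (m + 2) → ℝ :=
    fun i => if (i : ℕ) + 1 = m + 2 then -(x 0) else x (i + 1) with hy
  set N : Matrix (Fin (m + 2)) (Fin (m + 2)) ℝ :=
    Matrix.of (fun k i : Fin (m + 2) =>
      -(x i) * q * (if k = i then 1 else 0) + y i * p * (if k = i + 1 then 1 else 0)) with hN
  have hM : (Matrix.of fun r i : Fin (m + 2) =>
        -(x i) * q * (if r = j i then 1 else 0) +
          (if (i : ℕ) + 1 = m + 2 then -(x ⟨0, by omega⟩) else x (i + ⟨1, by omega⟩)) * p *
            (if r = j (i + ⟨1, by omega⟩) then 1 else 0)) = N.submatrix ⇑j⁻¹ id := by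
    ext r i
    simp only [Matrix.of_apply, Matrix.submatrix_apply, hN, hy, id_eq, Fin.mk_zero, Fin.mk_one,
      Equiv.Perm.inv_eq_iff_eq]
    rfl
  rw [hM, Matrix.det_permute]
  -- compute det N
  have hone_ne : ∀ i : Fin (m + 2), ¬ (i = i + 1) := by
    intro i h
    nth_rewrite 1 [← add_zero i] at h
    have h1 := add_left_cancel h
    exact absurd (congrArg Fin.val h1.symm) (by simp)
  have hone_ne' : ∀ i : Fin (m + 2), ¬ (i + 1 = i) := fun i h => hone_ne i h.symm
  have hdet : N.det = (-q) ^ (m + 2) * (∏ i, x i)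
      + ((-1 : ℝ) ^ (m + 1)) * (p ^ (m + 2) * (-(∏ i, x i))) := by
    rw [Matrix.det_apply']
    rw [← Finset.sum_subset (Finset.subset_univ
        ({1, finRotate (m + 2)} : Finset (Equiv.Perm (Fin (m + 2)))))]
    · have h1c : (1 : Equiv.Perm (Fin (m + 2))) ≠ finRotate (m + 2) := by
        intro h
        have := congrArg (fun e : Equiv.Perm (Fin (m + 2)) => e 0) h
        simp only [Equiv.Perm.one_apply, finRotate_succ_apply, zero_add] at this
        exact absurd (congrArg Fin.val this) (by simp)
      rw [Finset.sum_pair h1c]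
      have t1 : ((Equiv.Perm.sign (1 : Equiv.Perm (Fin (m + 2))) : ℤ) : ℝ) *
          ∏ i, N ((1 : Equiv.Perm (Fin (m + 2))) i) i = (-q) ^ (m + 2) * ∏ i, x i := by
        simp only [Equiv.Perm.sign_one, Units.val_one, Int.cast_one, one_mul,
          Equiv.Perm.one_apply]
        have : ∀ i : Fin (m + 2), N i i = -q * x i := by
          intro i
          simp only [hN, Matrix.of_apply, if_neg (hone_ne i)]
          simp only [if_true]
          ring
        rw [Finset.prod_congr rfl (fun i _ => this i), Finset.prod_mul_distrib,
          Finset.prod_const, Finset.card_univ, Fintype.card_fin]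
      have t2 : ((Equiv.Perm.sign (finRotate (m + 2)) : ℤ) : ℝ) *
          ∏ i, N (finRotate (m + 2) i) i
          = ((-1 : ℝ) ^ (m + 1)) * (p ^ (m + 2) * (-(∏ i, x i))) := by
        have hsign : ((Equiv.Perm.sign (finRotate (m + 2)) : ℤ) : ℝ) = (-1 : ℝ) ^ (m + 1) := by
          rw [sign_finRotate]
          push_cast
          ring
        rw [hsign]
        congr 1
        have hNy : ∀ i : Fin (m + 2), N (finRotate (m + 2) i) i = p * y i := by
          intro i
          rw [finRotate_succ_apply]
          simp only [hN, Matrix.of_apply, if_neg (hone_ne' i)]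
          simp only [if_true]
          ring
        rw [Finset.prod_congr rfl (fun i _ => hNy i), Finset.prod_mul_distrib,
          Finset.prod_const, Finset.card_univ, Fintype.card_fin]
        have hyc : ∀ i : Fin (m + 2),
            y i = (if i = (⟨m + 1, by omega⟩ : Fin (m + 2)) then (-1 : ℝ) else 1) * x (i + 1) := by
          intro i
          by_cases h : (i : ℕ) + 1 = m + 2
          · have hi : i = (⟨m + 1, by omega⟩ : Fin (m + 2)) := by
              apply Fin.ext; simp; omega
            have hwrap : i + 1 = 0 := by
              apply Fin.ext
              rw [Fin.val_add, Fin.val_one, Fin.val_zero, h, Nat.mod_self]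
            rw [hy]
            simp only [if_pos h, if_pos hi, hwrap]
            ring
          · have hi : ¬ i = (⟨m + 1, by omega⟩ : Fin (m + 2)) := by
              intro e; apply h; rw [e]
            rw [hy]
            simp only [if_neg h, if_neg hi, one_mul]
        rw [Finset.prod_congr rfl (fun i _ => hyc i), Finset.prod_mul_distrib]
        have hc : (∏ i : Fin (m + 2),
            (if i = (⟨m + 1, by omega⟩ : Fin (m + 2)) then (-1 : ℝ) else 1)) = -1 := by
          rw [Finset.prod_ite_eq' Finset.univ (⟨m + 1, by omega⟩ : Fin (m + 2))
            (fun _ => (-1 : ℝ))]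
          simp
        have hx1 : (∏ i : Fin (m + 2), x (i + 1)) = ∏ i, x i :=
          Fintype.prod_equiv (Equiv.addRight (1 : Fin (m + 2))) _ _ (fun i => rfl)
        rw [hc, hx1]
        ring
      rw [t1, t2]
    · intro σ _ hσ
      simp only [Finset.mem_insert, Finset.mem_singleton, not_or] at hσ
      have hchar : ¬ ∀ i, σ i = i ∨ σ i = i + 1 := by
        intro hc
        rcases cycle_perm_char σ hc with h | h
        · exact hσ.1 (Equiv.ext h)
        · exact hσ.2 (Equiv.ext fun i => (h i).trans (finRotate_succ_apply i).symm)
      push_neg at hchar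
      obtain ⟨i, hi1, hi2⟩ := hchar
      have : N (σ i) i = 0 := by
        simp only [hN, Matrix.of_apply, if_neg hi1, if_neg hi2]
        ring
      have hz : (∏ k, N (σ k) k) = 0 := Finset.prod_eq_zero (Finset.mem_univ i) this
      rw [hz, mul_zero]
  rw [hdet, abs_mul]
  have hsignabs : |((Equiv.Perm.sign j⁻¹ : ℤ) : ℝ)| = 1 := by
    rcases Int.units_eq_one_or (Equiv.Perm.sign j⁻¹) with h | h <;> rw [h] <;> simp
  rw [hsignabs, one_mul]
  have hrw : (-q) ^ (m + 2) * (∏ i, x i)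
      + ((-1 : ℝ) ^ (m + 1)) * (p ^ (m + 2) * (-(∏ i, x i)))
      = ((-1 : ℝ) ^ (m + 2)) * ((∏ i, x i) * (p ^ (m + 2) + q ^ (m + 2))) := by
    rw [neg_pow q]
    ring
  rw [hrw, abs_mul, abs_mul, abs_pow, abs_neg, abs_one, one_pow, one_mul]
  have hxabs : |∏ i, x i| = 1 := by
    rw [Finset.abs_prod]
    have : ∀ i : Fin (m + 2), |x i| = 1 := by
      intro i; rcases hx i with h | h <;> rw [h] <;> simp
    rw [Finset.prod_congr rfl (fun i _ => this i), Finset.prod_const_one]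
  have hp : (0 : ℝ) < p := hq.trans hqp
  rw [hxabs, one_mul, abs_of_pos (by positivity)]
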